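/- arXiv:2202.10618 — 2 statements merged into one kernel-verified Lean document; each statement's English description precedes it below -/
import Mathlib

section
/- Let Q be a chi-squared random variable with k degrees of freedom. Then for any x > 0: Pr[Q/k ≤ 1 − 2√(x/k)] ≤ exp(−x) and Pr[Q/k ≥ 1 + 2√(x/k) + 2x/k] ≤ exp(−x). -/
open MeasureTheory ProbabilityTheory ENNReal

/-- Two measures are `(ε,δ)`-close (differential-privacy style indistinguishability). -/
def DPClose {Ω : Type*} [MeasurableSpace Ω] (ε δ : ℝ) (P Q : Measure Ω) : Prop :=
  ∀ s : Set Ω, MeasurableSet s →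
    P s ≤ ENNReal.ofReal (Real.exp ε) * Q s + ENNReal.ofReal δ ∧
    Q s ≤ ENNReal.ofReal (Real.exp ε) * P s + ENNReal.ofReal δ

/-- Euclidean norm of a vector in `ℝ^d`. -/
noncomputable def vnorm {d : ℕ} (x : Fin d → ℝ) : ℝ :=
  Real.sqrt (∑ i, (x i) ^ 2)

/-- Isotropic Gaussian measure on `ℝ^d` with mean `μ` and per-coordinate variance `v`. -/
noncomputable def gaussVec (d : ℕ) (μ : Fin d → ℝ) (v : NNReal) : Measure (Fin d → ℝ) :=
  Measure.pi fun i => gaussianReal (μ i) v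

/-- Random `k × d` matrix with i.i.d. centered Gaussian entries of variance `v`. -/
noncomputable def gaussMat (k d : ℕ) (v : NNReal) : Measure (Fin k → Fin d → ℝ) :=
  Measure.pi fun _ => Measure.pi fun _ => gaussianReal 0 v

/-- Matrix-vector product. -/
def matVec {k d : ℕ} (W : Fin k → Fin d → ℝ) (x : Fin d → ℝ) : Fin k → ℝ :=
  fun i => ∑ j, W i j * x j

/-- Chi-squared distribution with `k` degrees of freedom: the law of the sum of
squares of `k` independent standard normals. -/
noncomputable def chiSq (k : ℕ) : Measure ℝ :=
  (Measure.pi fun _ : Fin k => gaussianReal 0 1).map (fun g => ∑ i, (g i) ^ 2)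

section Aux

open Real NNReal Set

private theorem my_integrable_pi_prod {ι : Type*} [Fintype ι] {E : Type*} [MeasurableSpace E]
    (μ : Measure E) [SigmaFinite μ] {f : ι → E → ℝ} (hf : ∀ i, Integrable (f i) μ) :
    Integrable (fun x : ι → E => ∏ i, f i (x i)) (Measure.pi fun _ => μ) := by
  letI : MeasureSpace E := ⟨μ⟩
  exact Integrable.fintype_prod hf

private theorem my_integral_pi_prod {ι : Type*} [Fintype ι] {E : Type*} [MeasurableSpace E]
    (μ : Measure E) [SigmaFinite μ] (f : ι → E → ℝ) :
    ∫ x : ι → E, ∏ i, f i (x i) ∂(Measure.pi fun _ => μ) = ∏ i, ∫ x, f i x ∂μ := by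
  letI : MeasureSpace E := ⟨μ⟩
  exact integral_fintype_prod_eq_prod f

private lemma pdf_mul (t x : ℝ) :
    gaussianPDFReal 0 1 x * Real.exp (t * x ^ 2) =
      (Real.sqrt (2 * π))⁻¹ * Real.exp (-(1/2 - t) * x ^ 2) := by
  simp only [gaussianPDFReal]
  rw [mul_assoc, ← Real.exp_add]
  push_cast
  ring_nf

private lemma gauss_sq_integrable {t : ℝ} (ht : t < 1/2) :
    Integrable (fun x => Real.exp (t * x ^ 2)) (gaussianReal 0 1) := by
  rw [gaussianReal_of_var_ne_zero 0 one_ne_zero]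
  have hmeas : Measurable fun x : ℝ => Real.toNNReal (gaussianPDFReal 0 1 x) :=
    (measurable_gaussianPDFReal 0 1).real_toNNReal
  have : gaussianPDF 0 1 = fun x => ((Real.toNNReal (gaussianPDFReal 0 1 x) : ℝ≥0) : ℝ≥0∞) := by
    funext x; simp [gaussianPDF, ENNReal.ofReal]
  rw [this, integrable_withDensity_iff_integrable_coe_smul hmeas]
  have : (fun x : ℝ => (Real.toNNReal (gaussianPDFReal 0 1 x) : ℝ) • Real.exp (t * x ^ 2)) =
      fun x => (Real.sqrt (2 * π))⁻¹ * Real.exp (-(1/2 - t) * x ^ 2) := by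
    funext x
    rw [smul_eq_mul, Real.coe_toNNReal _ (gaussianPDFReal_nonneg 0 1 x), pdf_mul]
  rw [this]
  exact (integrable_exp_neg_mul_sq (by linarith)).const_mul _

private lemma gauss_sq_integral {t : ℝ} (ht : t < 1/2) :
    ∫ x, Real.exp (t * x ^ 2) ∂(gaussianReal 0 1) = (Real.sqrt (1 - 2*t))⁻¹ := by
  have hb : (0:ℝ) < 1/2 - t := by linarith
  rw [gaussianReal_of_var_ne_zero 0 one_ne_zero]
  have hmeas : Measurable fun x : ℝ => Real.toNNReal (gaussianPDFReal 0 1 x) :=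
    (measurable_gaussianPDFReal 0 1).real_toNNReal
  have hpdf : gaussianPDF 0 1 = fun x => ((Real.toNNReal (gaussianPDFReal 0 1 x) : ℝ≥0) : ℝ≥0∞) := by
    funext x; simp [gaussianPDF, ENNReal.ofReal]
  rw [hpdf, integral_withDensity_eq_integral_smul hmeas]
  have : (fun x : ℝ => (Real.toNNReal (gaussianPDFReal 0 1 x) : ℝ≥0) • Real.exp (t * x ^ 2)) =
      fun x => (Real.sqrt (2 * π))⁻¹ * Real.exp (-(1/2 - t) * x ^ 2) := by
    funext x
    rw [NNReal.smul_def, smul_eq_mul, Real.coe_toNNReal _ (gaussianPDFReal_nonneg 0 1 x), pdf_mul]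
  rw [this, integral_const_mul, integral_gaussian]
  rw [← Real.sqrt_inv, ← Real.sqrt_inv, ← Real.sqrt_mul (by positivity)]
  congr 1
  have h2 : π / (1/2 - t) = 2 * π * (1 - 2*t)⁻¹ := by
    have h3 : (1:ℝ) - 2*t ≠ 0 := by linarith
    have h4 : (1:ℝ)/2 - t ≠ 0 := hb.ne'
    field_simp
  rw [h2, inv_mul_cancel_left₀ (by positivity)]

private lemma exp_sum_eq (k : ℕ) (t : ℝ) (g : Fin k → ℝ) :
    Real.exp (t * ∑ i, g i ^ 2) = ∏ i, Real.exp (t * g i ^ 2) := by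
  rw [Finset.mul_sum, Real.exp_sum]

private lemma chisq_exp_integrable (k : ℕ) {t : ℝ} (ht : t < 1/2) :
    Integrable (fun g : Fin k → ℝ => Real.exp (t * ∑ i, g i ^ 2))
      (Measure.pi fun _ => gaussianReal 0 1) := by
  simp_rw [exp_sum_eq]
  exact my_integrable_pi_prod _ (fun i => gauss_sq_integrable ht)

private lemma chisq_mgf (k : ℕ) {t : ℝ} (ht : t < 1/2) :
    mgf (fun g : Fin k → ℝ => ∑ i, g i ^ 2) (Measure.pi fun _ => gaussianReal 0 1) t
      = ((Real.sqrt (1 - 2*t))⁻¹) ^ k := by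
  rw [mgf]
  simp_rw [exp_sum_eq]
  rw [my_integral_pi_prod _ (fun _ x => Real.exp (t * x ^ 2)), Finset.prod_const,
    gauss_sq_integral ht, Finset.card_univ, Fintype.card_fin]

private lemma mono_aux {f f' : ℝ → ℝ} (hd : ∀ y ∈ Ici (0:ℝ), HasDerivAt f (f' y) y)
    (h0 : ∀ y ∈ Ici (0:ℝ), 0 ≤ f' y) {u : ℝ} (hu : 0 ≤ u) : f 0 ≤ f u := by
  have hmono : MonotoneOn f (Ici (0:ℝ)) := by
    refine monotoneOn_of_deriv_nonneg (convex_Ici 0)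
      (fun y hy => (hd y hy).continuousAt.continuousWithinAt) ?_ ?_
    · intro y hy
      rw [interior_Ici] at hy
      exact ((hd y (mem_Ici.mpr (le_of_lt hy))).differentiableAt).differentiableWithinAt
    · intro y hy
      rw [interior_Ici] at hy
      rw [(hd y (mem_Ici.mpr (le_of_lt hy))).deriv]
      exact h0 y (mem_Ici.mpr (le_of_lt hy))
  exact hmono (self_mem_Ici) hu hu

private lemma log_lower {u : ℝ} (hu : 0 ≤ u) : 2*u - 2*u^2 ≤ Real.log (1+2*u) := by
  have key : ∀ y : ℝ, 0 ≤ y → HasDerivAt (fun y => Real.log (1+2*y) - (2*y - 2*y^2))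
      (2/(1+2*y) - (2 - 4*y)) y := by
    intro y hy
    have h1 : (0:ℝ) < 1 + 2*y := by linarith
    have hlog : HasDerivAt (fun y : ℝ => Real.log (1+2*y)) (2/(1+2*y)) y := by
      have := (Real.hasDerivAt_log h1.ne').comp y
        ((hasDerivAt_const y (1:ℝ)).add ((hasDerivAt_id y).const_mul 2))
      exact this.congr_deriv (by ring)
    have hpoly : HasDerivAt (fun y : ℝ => 2*y - 2*y^2) (2 - 4*y) y := by
      have := ((hasDerivAt_id y).const_mul (2:ℝ)).sub
        (((hasDerivAt_pow 2 y)).const_mul (2:ℝ))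
      exact this.congr_deriv (by ring)
    exact hlog.sub hpoly
  have := mono_aux (fun y hy => key y hy)
    (fun y hy => by
      have h1 : (0:ℝ) < 1 + 2*y := by linarith [mem_Ici.mp hy]
      have hy' : 0 ≤ y := hy
      rw [sub_nonneg, le_div_iff₀ h1]
      nlinarith) hu
  simpa using this

private lemma log_upper {u : ℝ} (hu : 0 ≤ u) :
    Real.log (1+2*u) ≤ (2*u + 2*u^2)/(1+2*u) := by
  have key : ∀ y : ℝ, 0 ≤ y → HasDerivAt (fun y => (2*y + 2*y^2)/(1+2*y) - Real.log (1+2*y))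
      (4*y^2/(1+2*y)^2) y := by
    intro y hy
    have h1 : (0:ℝ) < 1 + 2*y := by linarith
    have hlog : HasDerivAt (fun y : ℝ => Real.log (1+2*y)) (2/(1+2*y)) y := by
      have := (Real.hasDerivAt_log h1.ne').comp y
        ((hasDerivAt_const y (1:ℝ)).add ((hasDerivAt_id y).const_mul 2))
      exact this.congr_deriv (by ring)
    have hnum : HasDerivAt (fun y : ℝ => 2*y + 2*y^2) (2 + 4*y) y := by
      have := ((hasDerivAt_id y).const_mul (2:ℝ)).add
        (((hasDerivAt_pow 2 y)).const_mul (2:ℝ))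
      exact this.congr_deriv (by ring)
    have hden : HasDerivAt (fun y : ℝ => 1+2*y) (2:ℝ) y := by
      exact ((hasDerivAt_const y (1:ℝ)).add ((hasDerivAt_id y).const_mul 2)).congr_deriv (by ring)
    have hdiv := hnum.div hden h1.ne'
    have := hdiv.sub hlog
    refine this.congr_deriv ?_
    field_simp
    ring
  have := mono_aux (fun y hy => key y hy)
    (fun y hy => by positivity) hu
  simp only [mul_zero, zero_add, add_zero, Real.log_one] at this
  norm_num at this
  linarith [this]

private lemma inv_sqrt_pow_eq (c : ℝ) (hc : 0 < c) (k : ℕ) :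
    ((Real.sqrt c)⁻¹) ^ k = Real.exp ((k : ℝ) * (-(Real.log c / 2))) := by
  have hs : Real.sqrt c = Real.exp (Real.log c / 2) := by
    rw [Real.sqrt_eq_rpow, Real.rpow_def_of_pos hc]
    ring_nf
  rw [hs, ← Real.exp_neg, ← Real.exp_nat_mul]

end Aux

/-- Laurent–Massart tail bounds for the chi-squared distribution with k degrees
of freedom. -/
theorem chiSq_tails (k : ℕ) (hk : 0 < k) (x : ℝ) (hx : 0 < x) :
    chiSq k {q | q / k ≤ 1 - 2 * Real.sqrt (x / k)} ≤ ENNReal.ofReal (Real.exp (-x)) ∧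
    chiSq k {q | 1 + 2 * Real.sqrt (x / k) + 2 * x / k ≤ q / k} ≤
      ENNReal.ofReal (Real.exp (-x)) := by
  set μk : Measure (Fin k → ℝ) := Measure.pi fun _ => gaussianReal 0 1 with hμk
  set X : (Fin k → ℝ) → ℝ := fun g => ∑ i, g i ^ 2 with hX
  have hXmeas : Measurable X := by
    apply Finset.measurable_sum
    exact fun i _ => (measurable_pi_apply i).pow_const 2
  have hprob : IsProbabilityMeasure μk := by infer_instance
  have hk0 : (0:ℝ) < k := Nat.cast_pos.mpr hk
  set u : ℝ := Real.sqrt (x / k) with hu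
  have hu0 : 0 < u := Real.sqrt_pos.mpr (by positivity)
  have hu2 : (k:ℝ) * u ^ 2 = x := by
    rw [hu, Real.sq_sqrt (by positivity)]
    field_simp
  have h1u : (0:ℝ) < 1 + 2*u := by linarith
  constructor
  · -- lower tail
    set a : ℝ := (k:ℝ) * (1 - 2*u) with ha
    have hset : (fun g : Fin k → ℝ => ∑ i, g i ^ 2) ⁻¹' {q : ℝ | q / (k:ℝ) ≤ 1 - 2 * u}
        = {g | X g ≤ a} := by
      ext g
      simp only [Set.mem_preimage, Set.mem_setOf_eq, hX, ha]
      rw [div_le_iff₀ hk0, mul_comm]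
    have hs : MeasurableSet {q : ℝ | q / (k:ℝ) ≤ 1 - 2 * u} :=
      measurableSet_le (by fun_prop) (by fun_prop)
    rw [chiSq, Measure.map_apply hXmeas hs, hset]
    have ht : -u ≤ (0:ℝ) := by linarith
    have hint := chisq_exp_integrable k (t := -u) (by linarith)
    have hch := measure_le_le_exp_mul_mgf (μ := μk) (X := X) (t := -u) a ht hint
    rw [chisq_mgf k (t := -u) (by linarith)] at hch
    rw [ENNReal.le_ofReal_iff_toReal_le (measure_ne_top _ _) (Real.exp_nonneg _)]
    refine hch.trans ?_
    rw [inv_sqrt_pow_eq _ (by linarith) k, ← Real.exp_add, Real.exp_le_exp]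
    have hlog := log_lower hu0.le
    have h12 : (1:ℝ) - 2 * -u = 1 + 2*u := by ring
    rw [h12]
    have : (k:ℝ) * (2*u - 2*u^2) ≤ (k:ℝ) * Real.log (1+2*u) := by
      exact mul_le_mul_of_nonneg_left hlog hk0.le
    nlinarith [this]
  · -- upper tail
    set t : ℝ := u / (1 + 2*u) with htdef
    have ht0 : 0 ≤ t := by positivity
    have ht2 : t < 1/2 := by
      rw [htdef, div_lt_iff₀ h1u]
      linarith
    set a : ℝ := (k:ℝ) + 2*(k:ℝ)*u + 2*x with ha
    have hset : (fun g : Fin k → ℝ => ∑ i, g i ^ 2) ⁻¹' {q : ℝ | 1 + 2 * u + 2 * x / (k:ℝ) ≤ q / (k:ℝ)}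
        = {g | a ≤ X g} := by
      ext g
      simp only [Set.mem_preimage, Set.mem_setOf_eq, hX, ha]
      rw [le_div_iff₀ hk0]
      constructor
      · intro h
        calc (k:ℝ) + 2*(k:ℝ)*u + 2*x = (1 + 2*u + 2*x/k) * k := by field_simp
          _ ≤ _ := h
      · intro h
        calc (1 + 2*u + 2*x/k) * k = (k:ℝ) + 2*(k:ℝ)*u + 2*x := by field_simp
          _ ≤ _ := h
    have hs : MeasurableSet {q : ℝ | 1 + 2 * u + 2 * x / (k:ℝ) ≤ q / (k:ℝ)} :=
      measurableSet_le (by fun_prop) (by fun_prop)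
    rw [chiSq, Measure.map_apply hXmeas hs, hset]
    have hint := chisq_exp_integrable k (t := t) ht2
    have hch := measure_ge_le_exp_mul_mgf (μ := μk) (X := X) (t := t) a ht0 hint
    rw [chisq_mgf k ht2] at hch
    rw [ENNReal.le_ofReal_iff_toReal_le (measure_ne_top _ _) (Real.exp_nonneg _)]
    refine hch.trans ?_
    have h12 : (1:ℝ) - 2 * t = (1 + 2*u)⁻¹ := by
      rw [htdef]
      field_simp
      ring
    rw [inv_sqrt_pow_eq _ (by rw [h12]; positivity) k, ← Real.exp_add, Real.exp_le_exp]
    rw [h12, Real.log_inv]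
    have hlog := log_upper hu0.le
    have hlogk : (k:ℝ) * Real.log (1+2*u) ≤ (k:ℝ) * ((2*u + 2*u^2)/(1+2*u)) :=
      mul_le_mul_of_nonneg_left hlog hk0.le
    have hta : t * (1 + 2*u) = u := by
      rw [htdef]; field_simp
    have hdiv : (k:ℝ) * ((2*u + 2*u^2)/(1+2*u)) * (1+2*u) = (k:ℝ) * (2*u + 2*u^2) := by
      field_simp
    -- goal : -t * a + k * (-(-(log (1+2u)) / 2)) ≤ -x
    have hgoal : -t * a + (k:ℝ) * (-(-Real.log (1+2*u) / 2)) ≤ -x := by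
      have h3 : (k:ℝ) * (-(-Real.log (1+2*u) / 2)) = (k:ℝ) * Real.log (1+2*u) / 2 := by ring
      rw [h3]
      rw [← mul_le_mul_iff_of_pos_right h1u]
      have expand : (-t * a + (k:ℝ) * Real.log (1+2*u) / 2) * (1+2*u)
          = -(t * (1+2*u)) * a + ((k:ℝ) * Real.log (1+2*u)) * (1+2*u) / 2 := by ring
      rw [expand, hta]
      have h4 : ((k:ℝ) * Real.log (1+2*u)) * (1+2*u) / 2 ≤ (k:ℝ) * (2*u + 2*u^2) / 2 := by
        rw [← hdiv]
        have := mul_le_mul_of_nonneg_right hlogk h1u.le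
        linarith
      nlinarith [h4]
    exact hgoal
end

section
/- Completeness of noisy-projection norm verification: Let x ∈ ℝ^d with ‖x‖ ≤ 1, let W ∈ ℝ^{k×d} have i.i.d. entries N(0,1/k), and let v = Wx + n where n ~ N(0, Sσ_v²I_k) is independent of W (modeling the aggregated noise of S servers). If τ ≥ √((1/k + Sσ_v²)(k + 2ln(1/β) + 2√(k·ln(1/β)))), then Pr[‖v‖ ≥ τ] ≤ β. -/
open MeasureTheory ProbabilityTheory ENNReal

section AuxiliaryLemmas
open Real

lemma aux_conv_pointwise {a b : NNReal} (ha : a ≠ 0) (hb : b ≠ 0) (y x : ℝ) :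
    gaussianPDFReal 0 a x * gaussianPDFReal x b y =
    gaussianPDFReal 0 (a + b) y *
      gaussianPDFReal ((a : ℝ) * y / ((a : ℝ) + (b : ℝ)))
        ⟨(a : ℝ) * (b : ℝ) / ((a : ℝ) + (b : ℝ)), by positivity⟩ x := by
  have hA : (0 : ℝ) < a := lt_of_le_of_ne a.2 (by simpa [eq_comm] using ha)
  have hB : (0 : ℝ) < b := lt_of_le_of_ne b.2 (by simpa [eq_comm] using hb)
  have hAB : (0 : ℝ) < (a : ℝ) + b := by linarith
  set v : NNReal := (⟨(a : ℝ) * (b : ℝ) / ((a : ℝ) + (b : ℝ)), by positivity⟩ : NNReal) with hv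
  have hvv : (v:ℝ) = (a : ℝ) * (b : ℝ) / ((a : ℝ) + (b : ℝ)) := rfl
  simp only [gaussianPDFReal, NNReal.coe_add, NNReal.coe_mk]
  rw [hvv]
  rw [mul_mul_mul_comm, mul_mul_mul_comm ((Real.sqrt (2 * π * ((a:ℝ)+(b:ℝ))))⁻¹)]
  have hπ : (0:ℝ) < π := pi_pos
  congr 1
  · rw [← mul_inv, ← mul_inv, ← Real.sqrt_mul (by positivity), ← Real.sqrt_mul (by positivity)]
    congr 1
    field_simp
  · rw [← Real.exp_add, ← Real.exp_add]
    congr 1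
    field_simp
    ring

lemma gaussianReal_add (a b : NNReal) :
    ((gaussianReal 0 a).prod (gaussianReal 0 b)).map (fun p : ℝ × ℝ => p.1 + p.2)
      = gaussianReal 0 (a + b) := by
  by_cases ha : a = 0
  · subst ha
    rw [gaussianReal_zero_var, Measure.dirac_prod, Measure.map_map (by fun_prop) (by fun_prop)]
    simp only [Function.comp_def, Prod.mk.eta, zero_add]
    simp [Measure.map_id]
  by_cases hb : b = 0
  · subst hb
    rw [gaussianReal_zero_var, Measure.prod_dirac, Measure.map_map (by fun_prop) (by fun_prop)]
    simp only [Function.comp_def, add_zero]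
    simp [Measure.map_id]
  -- main case
  have hA : (0 : ℝ) < a := lt_of_le_of_ne a.2 (by simpa [eq_comm] using ha)
  have hB : (0 : ℝ) < b := lt_of_le_of_ne b.2 (by simpa [eq_comm] using hb)
  have hab : a + b ≠ 0 := by
    intro h
    exact ha (add_eq_zero.mp h).1
  have hmeas2 : Measurable (fun p : ℝ × ℝ => gaussianPDF p.1 b p.2) := by
    simp only [gaussianPDF, gaussianPDFReal]
    fun_prop
  ext s hs
  have hind : Measurable (fun p : ℝ × ℝ => Set.indicator s (gaussianPDF p.1 b) p.2) :=
    hmeas2.indicator (measurable_snd hs)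
  rw [Measure.map_apply (by fun_prop) hs, Measure.prod_apply (hs.preimage (by fun_prop))]
  have h1 : ∀ xx : ℝ, (gaussianReal 0 b) (Prod.mk xx ⁻¹' ((fun p : ℝ × ℝ => p.1 + p.2) ⁻¹' s))
      = ∫⁻ yy, s.indicator (gaussianPDF xx b) yy := by
    intro xx
    have h2 : Prod.mk xx ⁻¹' ((fun p : ℝ × ℝ => p.1 + p.2) ⁻¹' s) = (fun yy => xx + yy) ⁻¹' s := rfl
    rw [h2, ← Measure.map_apply (by fun_prop) hs, gaussianReal_map_const_add, zero_add,
      gaussianReal_apply _ hb, ← lintegral_indicator hs]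
  simp_rw [h1]
  rw [gaussianReal_of_var_ne_zero _ ha,
    lintegral_withDensity_eq_lintegral_mul _ (measurable_gaussianPDF 0 a)
      (Measurable.lintegral_prod_right' hind)]
  simp only [Pi.mul_apply]
  calc ∫⁻ xx, gaussianPDF 0 a xx * ∫⁻ yy, s.indicator (gaussianPDF xx b) yy
      = ∫⁻ xx, ∫⁻ yy, gaussianPDF 0 a xx * s.indicator (gaussianPDF xx b) yy :=
        lintegral_congr fun xx =>
          (lintegral_const_mul _ ((measurable_gaussianPDF _ _).indicator hs)).symm
    _ = ∫⁻ yy, ∫⁻ xx, gaussianPDF 0 a xx * s.indicator (gaussianPDF xx b) yy :=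
        lintegral_lintegral_swap
          (((measurable_gaussianPDF 0 a).comp measurable_fst).mul hind).aemeasurable
    _ = ∫⁻ yy, s.indicator (gaussianPDF 0 (a + b)) yy := by
        refine lintegral_congr fun yy => ?_
        by_cases hy : yy ∈ s
        · simp only [Set.indicator_of_mem hy]
          have hv' : (⟨(a : ℝ) * (b : ℝ) / ((a : ℝ) + (b : ℝ)), by positivity⟩ : NNReal) ≠ 0 := by
            have hpos : (0:ℝ) < (a : ℝ) * (b : ℝ) / ((a : ℝ) + (b : ℝ)) := by positivity
            intro h
            have h2 := congrArg NNReal.toReal h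
            change (a : ℝ) * (b : ℝ) / ((a : ℝ) + (b : ℝ)) = 0 at h2
            exact absurd h2 (ne_of_gt hpos)
          calc ∫⁻ xx, gaussianPDF 0 a xx * gaussianPDF xx b yy
              = ∫⁻ xx, ENNReal.ofReal (gaussianPDFReal 0 a xx * gaussianPDFReal xx b yy) := by
                refine lintegral_congr fun xx => ?_
                rw [gaussianPDF, gaussianPDF, ← ENNReal.ofReal_mul (gaussianPDFReal_nonneg _ _ _)]
            _ = ∫⁻ xx, ENNReal.ofReal (gaussianPDFReal 0 (a + b) yy) *
                  gaussianPDF ((a : ℝ) * yy / ((a : ℝ) + (b : ℝ)))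
                    ⟨(a : ℝ) * (b : ℝ) / ((a : ℝ) + (b : ℝ)), by positivity⟩ xx := by
                refine lintegral_congr fun xx => ?_
                rw [aux_conv_pointwise ha hb]
                exact ENNReal.ofReal_mul (gaussianPDFReal_nonneg _ _ _)
            _ = gaussianPDF 0 (a + b) yy := by
                exact (lintegral_const_mul _ (measurable_gaussianPDF _ _)).trans
                  ((congrArg (ENNReal.ofReal (gaussianPDFReal 0 (a + b) yy) * ·)
                    (lintegral_gaussianPDF_eq_one _ hv')).trans (mul_one _))
        · simp only [Set.indicator_of_notMem hy, mul_zero, lintegral_zero]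
    _ = gaussianReal 0 (a + b) s := by
        rw [lintegral_indicator hs, ← gaussianReal_apply _ hab]

lemma lintegral_pi_prod : ∀ {k : ℕ} {α : Type} [MeasurableSpace α]
    (μ : Fin k → Measure α) [∀ i, SigmaFinite (μ i)] (f : Fin k → α → ℝ≥0∞)
    (hf : ∀ i, Measurable (f i)),
    ∫⁻ g, ∏ i, f i (g i) ∂Measure.pi μ = ∏ i, ∫⁻ a, f i a ∂μ i := by
  intro k
  induction k with
  | zero =>
    intro α _ μ _ f hf
    rw [Measure.pi_of_empty]
    simp
  | succ n ih =>
    intro α _ μ _ f hf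
    have hmp := measurePreserving_piFinSuccAbove μ 0
    have hF : Measurable fun g : Fin (n+1) → α => ∏ i, f i (g i) :=
      Finset.measurable_prod _ fun i _ => (hf i).comp (measurable_pi_apply i)
    calc ∫⁻ g, ∏ i, f i (g i) ∂Measure.pi μ
        = ∫⁻ p, ∏ i, f i (((MeasurableEquiv.piFinSuccAbove (fun _ => α) 0).symm p) i)
            ∂((μ 0).prod (Measure.pi fun j => μ (Fin.succAbove 0 j))) :=
          ((hmp.symm _).lintegral_comp hF).symm
      _ = ∫⁻ p, f 0 p.1 * ∏ j, f (Fin.succAbove 0 j) (p.2 j)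
            ∂((μ 0).prod (Measure.pi fun j => μ (Fin.succAbove 0 j))) := by
          refine lintegral_congr fun p => ?_
          rw [Fin.prod_univ_succ]
          simp [MeasurableEquiv.piFinSuccAbove_symm_apply, Fin.insertNthEquiv]
      _ = (∫⁻ a, f 0 a ∂μ 0) * ∏ j, ∫⁻ a, f (Fin.succAbove 0 j) a ∂μ (Fin.succAbove 0 j) := by
          refine (lintegral_prod_mul ((hf 0).aemeasurable)
            (g := fun r : Fin n → α => ∏ j, f (Fin.succAbove 0 j) (r j))
            (Finset.measurable_prod _ fun j _ =>
              (hf _).comp (measurable_pi_apply j)).aemeasurable).trans ?_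
          rw [ih _ _ fun j => hf _]
      _ = ∏ i, ∫⁻ a, f i a ∂μ i := by
          rw [Fin.prod_univ_succ]
          rfl

lemma pi_prod_map {k : ℕ} {α β γ : Type} [MeasurableSpace α] [MeasurableSpace β]
    [MeasurableSpace γ]
    (μ : Fin k → Measure α) (ν : Fin k → Measure β)
    [∀ i, IsProbabilityMeasure (μ i)] [∀ i, IsProbabilityMeasure (ν i)]
    (f : α → β → γ) (hf : Measurable fun p : α × β => f p.1 p.2) :
    ((Measure.pi μ).prod (Measure.pi ν)).map (fun p (i : Fin k) => f (p.1 i) (p.2 i))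
      = Measure.pi (fun i => ((μ i).prod (ν i)).map (fun p => f p.1 p.2)) := by
  have hV : Measurable (fun (p : (Fin k → α) × (Fin k → β)) (i : Fin k) => f (p.1 i) (p.2 i)) :=
    measurable_pi_lambda _ fun i => by
      have := hf.comp (f := fun p : (Fin k → α) × (Fin k → β) => (p.1 i, p.2 i)) (by fun_prop)
      exact this
  refine (Measure.pi_eq fun s hs => ?_).symm
  rw [Measure.map_apply hV (MeasurableSet.univ_pi fun i => hs i)]
  have hpre : (fun (p : (Fin k → α) × (Fin k → β)) (i : Fin k) => f (p.1 i) (p.2 i)) ⁻¹'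
      (Set.univ.pi s) = {p | ∀ i, f (p.1 i) (p.2 i) ∈ s i} := by
    ext p; simp [Set.mem_pi]
  rw [hpre]
  have hmeasset : MeasurableSet {p : (Fin k → α) × (Fin k → β) | ∀ i, f (p.1 i) (p.2 i) ∈ s i} := by
    have : {p : (Fin k → α) × (Fin k → β) | ∀ i, f (p.1 i) (p.2 i) ∈ s i}
        = ⋂ i, {p : (Fin k → α) × (Fin k → β) | f (p.1 i) (p.2 i) ∈ s i} := by
      ext p; simp
    rw [this]
    exact MeasurableSet.iInter fun i =>
      (show Measurable fun p : (Fin k → α) × (Fin k → β) => f (p.1 i) (p.2 i) from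
        hf.comp (f := fun p : (Fin k → α) × (Fin k → β) => (p.1 i, p.2 i)) (by fun_prop)) (hs i)
  rw [Measure.prod_apply hmeasset]
  have h2 : ∀ W : Fin k → α,
      (Measure.pi ν) (Prod.mk W ⁻¹' {p : (Fin k → α) × (Fin k → β) | ∀ i, f (p.1 i) (p.2 i) ∈ s i})
        = ∏ i, (ν i) {t | f (W i) t ∈ s i} := by
    intro W
    have : Prod.mk W ⁻¹' {p : (Fin k → α) × (Fin k → β) | ∀ i, f (p.1 i) (p.2 i) ∈ s i}
        = Set.univ.pi fun i => {t | f (W i) t ∈ s i} := by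
      ext n; simp [Set.mem_pi]
    rw [this, Measure.pi_pi]
  simp_rw [h2]
  have h3 : ∀ i, ∀ a : α, (ν i) {t | f a t ∈ s i} = (fun a => (ν i) (Prod.mk a ⁻¹' ((fun p : α × β => f p.1 p.2) ⁻¹' (s i)))) a := by
    intro i a; rfl
  calc ∫⁻ W, ∏ i, (ν i) {t | f (W i) t ∈ s i} ∂Measure.pi μ
      = ∏ i, ∫⁻ a, (ν i) {t | f a t ∈ s i} ∂μ i := by
        refine lintegral_pi_prod μ (fun i a => (ν i) {t | f a t ∈ s i}) fun i => ?_
        simp_rw [h3 i]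
        exact measurable_measure_prodMk_left (hf (hs i))
    _ = ∏ i, ((μ i).prod (ν i)).map (fun p => f p.1 p.2) (s i) := by
        refine Finset.prod_congr rfl fun i _ => ?_
        rw [Measure.map_apply hf (hs i), Measure.prod_apply (hf (hs i))]
        rfl

lemma gauss_linear : ∀ {d : ℕ} (v : NNReal) (x : Fin d → ℝ),
    (Measure.pi fun _ : Fin d => gaussianReal 0 v).map (fun r => ∑ j, r j * x j)
      = gaussianReal 0 ((∑ j, (x j) ^ 2).toNNReal * v) := by
  intro d
  induction d with
  | zero =>
    intro v x
    rw [Measure.pi_of_empty]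
    have : (fun r : Fin 0 → ℝ => ∑ j, r j * x j) = fun _ => (0 : ℝ) := by
      funext r; simp
    rw [this, Measure.map_dirac' (measurable_const)]
    simp [gaussianReal_zero_var]
  | succ n ih =>
    intro v x
    have hmp := (measurePreserving_piFinSuccAbove (fun _ : Fin (n+1) => gaussianReal 0 v) 0).symm
      (MeasurableEquiv.piFinSuccAbove (fun _ => ℝ) 0)
    have hsum : Measurable fun r : Fin (n+1) → ℝ => ∑ j, r j * x j :=
      Finset.measurable_sum _ fun j _ => (measurable_pi_apply j).mul_const _
    calc (Measure.pi fun _ : Fin (n+1) => gaussianReal 0 v).map (fun r => ∑ j, r j * x j)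
        = (((gaussianReal 0 v).prod (Measure.pi fun _ : Fin n => gaussianReal 0 v)).map
            (MeasurableEquiv.piFinSuccAbove (fun _ => ℝ) 0).symm).map
            (fun r => ∑ j, r j * x j) := by rw [hmp.map_eq]
      _ = ((gaussianReal 0 v).prod (Measure.pi fun _ : Fin n => gaussianReal 0 v)).map
            (fun p : ℝ × (Fin n → ℝ) => p.1 * x 0 + ∑ j, p.2 j * x (Fin.succAbove 0 j)) := by
          rw [Measure.map_map hsum (MeasurableEquiv.measurable _)]
          congr 1
          funext p
          simp only [Function.comp_apply]
          rw [Fin.sum_univ_succ]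
          simp [MeasurableEquiv.piFinSuccAbove_symm_apply, Fin.insertNthEquiv,
            Fin.succAbove_zero]
      _ = gaussianReal 0 ((∑ j, (x j) ^ 2).toNNReal * v) := by
          have hcomp : (fun p : ℝ × (Fin n → ℝ) =>
              p.1 * x 0 + ∑ j, p.2 j * x (Fin.succAbove 0 j))
              = (fun q : ℝ × ℝ => q.1 + q.2) ∘
                (Prod.map (fun a : ℝ => a * x 0)
                  (fun r : Fin n → ℝ => ∑ j, r j * x (Fin.succAbove 0 j))) := rfl
          rw [hcomp, ← Measure.map_map (by fun_prop)
            ((measurable_mul_const _).prodMap (Finset.measurable_sum _ fun j _ =>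
              (measurable_pi_apply j).mul_const _)),
            ← Measure.map_prod_map _ _ (measurable_mul_const _)
              (Finset.measurable_sum _ fun j _ => (measurable_pi_apply j).mul_const _),
            gaussianReal_map_mul_const, ih, mul_zero, gaussianReal_add]
          congr 1
          have h1 : (0:ℝ) ≤ ∑ j, (x (Fin.succAbove 0 j))^2 :=
            Finset.sum_nonneg fun j _ => sq_nonneg _
          have h2 : (0:ℝ) ≤ ∑ j : Fin (n+1), (x j)^2 :=
            Finset.sum_nonneg fun j _ => sq_nonneg _
          ext
          push_cast [Real.coe_toNNReal _ h1, Real.coe_toNNReal _ h2]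
          rw [Fin.sum_univ_succ]
          simp only [Fin.succAbove_zero]
          ring

lemma gauss_mgf (u : NNReal) {θ : ℝ} (hθ : 0 ≤ θ) (h2 : 2 * θ * u < 1) :
    ∫⁻ y, ENNReal.ofReal (Real.exp (θ * y ^ 2)) ∂(gaussianReal 0 u)
      = ENNReal.ofReal (Real.sqrt (1 / (1 - 2 * θ * u))) := by
  by_cases hu : u = 0
  · subst hu
    rw [gaussianReal_zero_var, lintegral_dirac' _ (by fun_prop)]
    simp
  have hU : (0 : ℝ) < u := lt_of_le_of_ne u.2 (by simpa [eq_comm] using hu)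
  have hb : (0 : ℝ) < (2 * (u:ℝ))⁻¹ - θ := by
    have h3 : θ < 1 / (2 * (u:ℝ)) := (lt_div_iff₀ (by positivity)).mpr (by nlinarith)
    rw [one_div] at h3
    linarith
  have hπ : (0:ℝ) < π := pi_pos
  rw [gaussianReal_of_var_ne_zero _ hu,
    lintegral_withDensity_eq_lintegral_mul _ (measurable_gaussianPDF 0 u) (by fun_prop)]
  have hpt : ∀ y : ℝ, (gaussianPDF 0 u * fun y => ENNReal.ofReal (Real.exp (θ * y ^ 2))) y
      = ENNReal.ofReal ((Real.sqrt (2 * π * u))⁻¹ * Real.exp (-(((2 * (u:ℝ))⁻¹ - θ)) * y ^ 2)) := by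
    intro y
    simp only [Pi.mul_apply, gaussianPDF, gaussianPDFReal, sub_zero]
    rw [← ENNReal.ofReal_mul (by positivity)]
    congr 1
    rw [mul_assoc, ← Real.exp_add]
    congr 1
    field_simp
    ring
  simp_rw [hpt]
  rw [← ofReal_integral_eq_lintegral_ofReal
    (((integrable_exp_neg_mul_sq hb).const_mul _))
    (Filter.Eventually.of_forall fun y => by positivity)]
  congr 1
  rw [integral_const_mul, integral_gaussian]
  rw [← Real.sqrt_inv, ← Real.sqrt_mul (by positivity)]
  congr 1
  have hne : (1:ℝ) - 2 * θ * u ≠ 0 := by nlinarith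
  field_simp [hb.ne']

lemma core_ineq (k : ℕ) (hk : 0 < k) {t : ℝ} (ht : 0 ≤ t) :
    Real.exp (-(Real.sqrt ((k:ℝ) * t) + t)) *
      (Real.sqrt (((k:ℝ) + 2*t + 2*Real.sqrt ((k:ℝ)*t)) / (k:ℝ)))^k ≤ Real.exp (-t) := by
  set K : ℝ := (k:ℝ) with hK
  have hKpos : 0 < K := by rw [hK]; exact_mod_cast hk
  set s : ℝ := Real.sqrt (t / K) with hsdef
  have hs0 : 0 ≤ s := Real.sqrt_nonneg _
  have hs2 : s ^ 2 = t / K := Real.sq_sqrt (by positivity)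
  have hKs : Real.sqrt (K * t) = K * s := by
    rw [show K * t = K ^ 2 * (t / K) from by field_simp, Real.sqrt_mul (by positivity),
      Real.sqrt_sq hKpos.le]
  have hAK : (K + 2*t + 2*Real.sqrt (K*t)) / K = 1 + 2*s + 2*s^2 := by
    rw [hKs, hs2]
    field_simp
    ring
  have hexp : 1 + 2*s + 2*s^2 ≤ Real.exp (2*s) := by
    have h3 := Real.sum_le_exp_of_nonneg (by positivity : (0:ℝ) ≤ 2*s) 3
    simp [Finset.sum_range_succ] at h3
    nlinarith [h3]
  have hsqrt : Real.sqrt ((K + 2*t + 2*Real.sqrt (K*t)) / K) ≤ Real.exp s := by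
    rw [hAK]
    have h4 : 1 + 2*s + 2*s^2 ≤ (Real.exp s)^2 := by
      have hsq : Real.exp (2*s) = (Real.exp s)^2 := by rw [two_mul, Real.exp_add, sq]
      rw [← hsq]
      exact hexp
    calc Real.sqrt (1 + 2*s + 2*s^2) ≤ Real.sqrt ((Real.exp s)^2) := Real.sqrt_le_sqrt h4
      _ = Real.exp s := Real.sqrt_sq (Real.exp_pos s).le
  have hpow : (Real.sqrt ((K + 2*t + 2*Real.sqrt (K*t)) / K))^k ≤ Real.exp (K * s) := by
    calc (Real.sqrt ((K + 2*t + 2*Real.sqrt (K*t)) / K))^k ≤ (Real.exp s)^k :=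
          pow_le_pow_left₀ (Real.sqrt_nonneg _) hsqrt k
      _ = Real.exp (K * s) := by rw [← Real.exp_nat_mul]
  calc Real.exp (-(Real.sqrt (K * t) + t)) * (Real.sqrt ((K + 2*t + 2*Real.sqrt (K*t)) / K))^k
      ≤ Real.exp (-(Real.sqrt (K * t) + t)) * Real.exp (K * s) :=
        mul_le_mul_of_nonneg_left hpow (Real.exp_pos _).le
    _ = Real.exp (-t) := by rw [← Real.exp_add, hKs]; congr 1; ring

end AuxiliaryLemmas

/-- Completeness of noisy-projection norm verification: for ‖x‖ ≤ 1 and a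
suitably large threshold τ, the noisy projection v = Wx + n has ‖v‖ < τ except
with probability β. -/
theorem norm_verification_completeness (k d S : ℕ) (hk : 0 < k) (σv τ β : ℝ)
    (hβ : 0 < β) (x : Fin d → ℝ) (hx : vnorm x ≤ 1)
    (hτ : τ ≥ Real.sqrt ((1 / k + S * σv ^ 2) *
      (k + 2 * Real.log (1 / β) + 2 * Real.sqrt (k * Real.log (1 / β))))) :
    ((gaussMat k d ((k : NNReal))⁻¹).prod
        (gaussVec k (fun _ => 0) ((S * σv ^ 2).toNNReal)))
      {p | τ ≤ vnorm (fun i => matVec p.1 x i + p.2 i)} ≤ ENNReal.ofReal β := by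
  classical
  set w : NNReal := (S * σv ^ 2).toNNReal with hw
  set vk : NNReal := ((k : NNReal))⁻¹ with hvk
  haveI h1 : IsProbabilityMeasure (gaussMat k d vk) := by
    unfold gaussMat; infer_instance
  haveI h2 : IsProbabilityMeasure (gaussVec k (fun _ => 0) w) := by
    unfold gaussVec; infer_instance
  set P := (gaussMat k d vk).prod (gaussVec k (fun _ => 0) w) with hP
  haveI : IsProbabilityMeasure P := by infer_instance
  by_cases hβ1 : 1 ≤ β
  · calc P {p | τ ≤ vnorm (fun i => matVec p.1 x i + p.2 i)} ≤ 1 := prob_le_one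
      _ ≤ ENNReal.ofReal β := by
        rw [← ENNReal.ofReal_one]; exact ENNReal.ofReal_le_ofReal hβ1
  push_neg at hβ1
  -- numeric constants
  set t : ℝ := Real.log (1/β) with htdef
  have ht : 0 ≤ t := Real.log_nonneg (by rw [le_div_iff₀ hβ]; linarith)
  set K : ℝ := (k : ℝ) with hK
  have hKpos : 0 < K := by rw [hK]; exact_mod_cast hk
  set A : ℝ := K + 2*t + 2*Real.sqrt (K*t) with hA
  have hApos : 0 < A := by
    have := Real.sqrt_nonneg (K*t); rw [hA]; linarith
  set lam : ℝ := (Real.sqrt (K*t) + t)/A with hlam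
  have hlam0 : 0 ≤ lam := div_nonneg (by have := Real.sqrt_nonneg (K*t); linarith) hApos.le
  have h2lam : 1 - 2*lam = K/A := by
    rw [hlam, hA]; field_simp; ring
  have hlamlt : 2*lam < 1 := by
    have hKA : 0 < K/A := div_pos hKpos hApos
    linarith [h2lam]
  set c : ℝ := 1/K + S*σv^2 with hc
  have hcpos : 0 < c := by rw [hc]; positivity
  set θ : ℝ := lam / c with hθdef
  have hθ0 : 0 ≤ θ := div_nonneg hlam0 hcpos.le
  have hθc : θ * c = lam := div_mul_cancel₀ _ hcpos.ne'
  -- variance of the law of v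
  set X2 : ℝ := ∑ j, (x j)^2 with hX2
  have hX20 : 0 ≤ X2 := Finset.sum_nonneg fun j _ => sq_nonneg _
  have hX21 : X2 ≤ 1 := by
    have h3 := Real.sq_sqrt hX20
    have h4 : Real.sqrt X2 ≤ 1 := hx
    nlinarith [Real.sqrt_nonneg X2]
  set cnn : NNReal := X2.toNNReal * vk + w with hcnn
  have hcnncoe : (cnn : ℝ) = X2 * K⁻¹ + S*σv^2 := by
    rw [hcnn]
    push_cast
    rw [Real.coe_toNNReal _ hX20, Real.coe_toNNReal _ (by positivity)]
    rw [hvk, hK]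
    push_cast
    ring
  have hcnnle : (cnn : ℝ) ≤ c := by
    rw [hcnncoe, hc, one_div]
    have : X2 * K⁻¹ ≤ K⁻¹ := by
      have := inv_nonneg.mpr hKpos.le
      nlinarith
    linarith
  have h2θcnn : 2*θ*(cnn:ℝ) < 1 := by
    have hθcnn : θ * (cnn:ℝ) ≤ θ * c := mul_le_mul_of_nonneg_left hcnnle hθ0
    rw [hθc] at hθcnn
    linarith
  clear_value t K A lam c θ X2
  -- the law of the noisy projection
  have hVmeas : Measurable (fun p : (Fin k → Fin d → ℝ) × (Fin k → ℝ) =>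
      fun i : Fin k => matVec p.1 x i + p.2 i) := by
    refine measurable_pi_lambda _ fun i => Measurable.add ?_ ?_
    · exact Finset.measurable_sum _ fun j _ =>
        ((measurable_pi_apply j).comp ((measurable_pi_apply i).comp measurable_fst)).mul_const _
    · exact (measurable_pi_apply i).comp measurable_snd
  have hLmeas : Measurable (fun r : Fin d → ℝ => ∑ j, r j * x j) :=
    Finset.measurable_sum _ fun j _ => (measurable_pi_apply j).mul_const _
  have hfmeas : Measurable (fun p : (Fin d → ℝ) × ℝ => (∑ j, p.1 j * x j) + p.2) :=
    (hLmeas.comp measurable_fst).add measurable_snd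
  have hlaw : P.map (fun p => fun i : Fin k => matVec p.1 x i + p.2 i)
      = Measure.pi (fun _ : Fin k => gaussianReal 0 cnn) := by
    rw [hP]
    have heq : (fun (p : (Fin k → Fin d → ℝ) × (Fin k → ℝ)) (i : Fin k) =>
        matVec p.1 x i + p.2 i)
        = fun p i => (fun (a : Fin d → ℝ) (b : ℝ) => (∑ j, a j * x j) + b) (p.1 i) (p.2 i) := rfl
    rw [heq]
    rw [show gaussMat k d vk = Measure.pi (fun _ : Fin k => Measure.pi fun _ : Fin d =>
      gaussianReal 0 vk) from rfl]
    rw [show gaussVec k (fun _ => 0) w = Measure.pi (fun _ : Fin k => gaussianReal 0 w) from rfl]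
    rw [pi_prod_map _ _ (fun (a : Fin d → ℝ) (b : ℝ) => (∑ j, a j * x j) + b) hfmeas]
    congr 1
    funext i
    have hcomp : (fun p : (Fin d → ℝ) × ℝ => (∑ j, p.1 j * x j) + p.2)
        = (fun q : ℝ × ℝ => q.1 + q.2) ∘
          (Prod.map (fun r : Fin d → ℝ => ∑ j, r j * x j) (id : ℝ → ℝ)) := rfl
    rw [hcomp, ← Measure.map_map (by fun_prop) (hLmeas.prodMap measurable_id),
      ← Measure.map_prod_map _ _ hLmeas measurable_id, Measure.map_id,
      gauss_linear, gaussianReal_add, ← hX2]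
  -- event rewriting
  have hvnmeas : Measurable (vnorm (d := k)) := by
    unfold vnorm
    exact Real.continuous_sqrt.measurable.comp (Finset.measurable_sum _ fun i _ =>
      (measurable_pi_apply i).pow_const 2)
  have hsetmeas : MeasurableSet {y : Fin k → ℝ | τ ≤ vnorm y} :=
    measurableSet_le measurable_const hvnmeas
  have hPA : P {p | τ ≤ vnorm (fun i => matVec p.1 x i + p.2 i)}
      = (Measure.pi (fun _ : Fin k => gaussianReal 0 cnn)) {y | τ ≤ vnorm y} := by
    rw [← hlaw, Measure.map_apply hVmeas hsetmeas]
    rfl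
  rw [hPA]
  set Q := Measure.pi (fun _ : Fin k => gaussianReal 0 cnn) with hQ
  -- threshold facts
  have hτ0 : 0 ≤ τ := le_trans (Real.sqrt_nonneg _) hτ
  have hcA : 0 ≤ c * A := by positivity
  have hτ2 : c * A ≤ τ^2 := by
    have h5 : Real.sqrt (c * A) ≤ τ := hτ
    calc c * A = (Real.sqrt (c*A))^2 := (Real.sq_sqrt hcA).symm
      _ ≤ τ^2 := pow_le_pow_left₀ (Real.sqrt_nonneg _) h5 2
  -- Markov / Chernoff
  set F : (Fin k → ℝ) → ℝ≥0∞ := fun y => ENNReal.ofReal (Real.exp (θ * ∑ i, (y i)^2)) with hF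
  have hFmeas : Measurable F :=
    ENNReal.measurable_ofReal.comp (Real.measurable_exp.comp
      ((Finset.measurable_sum _ fun i _ => (measurable_pi_apply i).pow_const 2).const_mul θ))
  have hsub : {y : Fin k → ℝ | τ ≤ vnorm y} ⊆
      {y | ENNReal.ofReal (Real.exp (θ * τ^2)) ≤ F y} := by
    intro y hy
    simp only [Set.mem_setOf_eq] at hy ⊢
    have hsum0 : 0 ≤ ∑ i, (y i)^2 := Finset.sum_nonneg fun i _ => sq_nonneg _
    have h6 : τ^2 ≤ ∑ i, (y i)^2 := by
      calc τ^2 ≤ (vnorm y)^2 := pow_le_pow_left₀ hτ0 hy 2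
        _ = ∑ i, (y i)^2 := by unfold vnorm; exact Real.sq_sqrt hsum0
    exact ENNReal.ofReal_le_ofReal (Real.exp_le_exp.mpr (mul_le_mul_of_nonneg_left h6 hθ0))
  have hmarkov : ENNReal.ofReal (Real.exp (θ * τ^2)) * Q {y | τ ≤ vnorm y}
      ≤ ∫⁻ y, F y ∂Q :=
    le_trans (mul_le_mul_right (measure_mono hsub) _)
      (mul_meas_ge_le_lintegral₀ hFmeas.aemeasurable _)
  have hmgfall : ∫⁻ y, F y ∂Q
      = (ENNReal.ofReal (Real.sqrt (1 / (1 - 2*θ*(cnn:ℝ)))))^k := by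
    have h7 : ∀ y : Fin k → ℝ, F y
        = ∏ i, (fun a : ℝ => ENNReal.ofReal (Real.exp (θ * a^2))) (y i) := by
      intro y
      rw [hF]
      simp only
      rw [← ENNReal.ofReal_prod_of_nonneg (fun _ _ => (Real.exp_pos _).le), ← Real.exp_sum,
        Finset.mul_sum]
    simp_rw [h7]
    rw [hQ, lintegral_pi_prod _ (fun (_ : Fin k) (a : ℝ) => ENNReal.ofReal (Real.exp (θ * a^2)))
      (fun i => ENNReal.measurable_ofReal.comp
        (Real.measurable_exp.comp ((measurable_id.pow_const 2).const_mul θ)))]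
    rw [Finset.prod_congr rfl fun i _ => gauss_mgf cnn hθ0 h2θcnn]
    rw [Finset.prod_const, Finset.card_univ, Fintype.card_fin]
  -- put it together
  have hεpos : 0 < Real.exp (θ * τ^2) := Real.exp_pos _
  have hεne : ENNReal.ofReal (Real.exp (θ * τ^2)) ≠ 0 := by
    simp [ENNReal.ofReal_eq_zero, not_le, hεpos]
  have hεtop : ENNReal.ofReal (Real.exp (θ * τ^2)) ≠ ⊤ := ENNReal.ofReal_ne_top
  have hQT : Q {y | τ ≤ vnorm y}
      ≤ ENNReal.ofReal (Real.exp (-(θ * τ^2))) *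
        (ENNReal.ofReal (Real.sqrt (1 / (1 - 2*θ*(cnn:ℝ)))))^k := by
    have h8 : Q {y | τ ≤ vnorm y} = (ENNReal.ofReal (Real.exp (θ * τ^2)))⁻¹ *
        (ENNReal.ofReal (Real.exp (θ * τ^2)) * Q {y | τ ≤ vnorm y}) := by
      rw [← mul_assoc, ENNReal.inv_mul_cancel hεne hεtop, one_mul]
    rw [h8]
    calc (ENNReal.ofReal (Real.exp (θ * τ^2)))⁻¹ *
        (ENNReal.ofReal (Real.exp (θ * τ^2)) * Q {y | τ ≤ vnorm y})
        ≤ (ENNReal.ofReal (Real.exp (θ * τ^2)))⁻¹ * ∫⁻ y, F y ∂Q :=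
          mul_le_mul_right hmarkov _
      _ = ENNReal.ofReal (Real.exp (-(θ * τ^2))) *
          (ENNReal.ofReal (Real.sqrt (1 / (1 - 2*θ*(cnn:ℝ)))))^k := by
          rw [hmgfall, Real.exp_neg, ENNReal.ofReal_inv_of_pos hεpos]
  refine le_trans hQT ?_
  rw [← ENNReal.ofReal_pow (Real.sqrt_nonneg _), ← ENNReal.ofReal_mul (Real.exp_pos _).le]
  refine ENNReal.ofReal_le_ofReal ?_
  -- final real-number inequality
  have hKA2 : 0 < K/A := div_pos hKpos hApos
  have hden : K/A ≤ 1 - 2*θ*(cnn:ℝ) := by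
    have hθcnn : θ * (cnn:ℝ) ≤ lam := by
      have := mul_le_mul_of_nonneg_left hcnnle hθ0
      rw [hθc] at this
      linarith
    linarith [h2lam]
  have hCle : Real.sqrt (1 / (1 - 2*θ*(cnn:ℝ))) ≤ Real.sqrt (A/K) := by
    refine Real.sqrt_le_sqrt ?_
    calc 1 / (1 - 2*θ*(cnn:ℝ)) ≤ 1 / (K/A) := one_div_le_one_div_of_le hKA2 hden
      _ = A/K := one_div_div _ _
  have hlamA : lam * A = Real.sqrt (K*t) + t := by
    rw [hlam]; exact div_mul_cancel₀ _ hApos.ne'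
  have h9 : Real.sqrt (K*t) + t ≤ θ * τ^2 := by
    have h10 : θ * (c * A) ≤ θ * τ^2 := mul_le_mul_of_nonneg_left hτ2 hθ0
    calc Real.sqrt (K*t) + t = lam * A := hlamA.symm
      _ = θ * (c * A) := by rw [← hθc]; ring
      _ ≤ θ * τ^2 := h10
  have hexple : Real.exp (-(θ * τ^2)) ≤ Real.exp (-(Real.sqrt (K*t) + t)) :=
    Real.exp_le_exp.mpr (neg_le_neg h9)
  calc Real.exp (-(θ * τ^2)) * (Real.sqrt (1 / (1 - 2*θ*(cnn:ℝ))))^k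
      ≤ Real.exp (-(Real.sqrt (K*t) + t)) * (Real.sqrt (A/K))^k :=
        mul_le_mul hexple (pow_le_pow_left₀ (Real.sqrt_nonneg _) hCle k)
          (pow_nonneg (Real.sqrt_nonneg _) k) (Real.exp_pos _).le
    _ ≤ Real.exp (-t) := by
        rw [hA, hK]
        exact core_ineq k hk ht
    _ = β := by rw [htdef, one_div, Real.log_inv, neg_neg, Real.exp_log hβ]
end
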